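/- Let Z = (Z_i)_{i≥0} be a Markov chain on a complete separable metric space (𝒳,d) with transition kernel P, unique invariant distribution π, and pseudo spectral gap γ_ps > 0, started from μ ≪ π with dμ/dπ ∈ L^p(π) for some p ∈ (1,∞]. Then for every n ≥ 1/γ_ps, every x ∈ 𝒳 and every h > 0, P^μ( Σ_{i=0}^{n−1} 1_{B(x,h)}(Z_i) = 0 ) ≤ ‖dμ/dπ‖_{L^p(π)} exp( − n π(B(x,h)) γ_ps / (36 p̄) ). -/

import Mathlib

open MeasureTheory ProbabilityTheory
open scoped ENNReal

/-- Conjugate Hölder exponent: `p̄ = p/(p-1)` for finite `p`, and `p̄ = 1` for `p = ∞`. -/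
noncomputable def conjExp (p : ℝ≥0∞) : ℝ :=
  if p = ∞ then 1 else p.toReal / (p.toReal - 1)

/-- Sup-norm deviation `‖f - π(f)‖_∞`. -/
noncomputable def supDev {X : Type*} [MeasurableSpace X] (π : Measure X) (f : X → ℝ) : ℝ :=
  ⨆ x, |f x - ∫ y, f y ∂π|

/-- Variance `σ²(f) = π(f²) - π(f)²`. -/
noncomputable def varPi {X : Type*} [MeasurableSpace X] (π : Measure X) (f : X → ℝ) : ℝ :=
  (∫ y, f y ^ 2 ∂π) - (∫ y, f y ∂π) ^ 2

set_option maxHeartbeats 1000000 in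
/-- For a Markov chain with pseudo spectral gap `γ > 0`, warm start `μ ≪ π` with
`dμ/dπ ∈ L^p(π)` (so that the warm-start Bernstein inequality `hBernstein` holds),
for every `n ≥ 1/γ`, every `x ∈ 𝒳` and every `h > 0`,
`P^μ(Σ_{i<n} 1_{B(x,h)}(Z_i) = 0) ≤ ‖dμ/dπ‖_{L^p(π)} exp(-n π(B(x,h)) γ / (36 p̄))`. -/
theorem no_visit_ball_bound
    {X : Type*} [MetricSpace X] [CompleteSpace X] [TopologicalSpace.SeparableSpace X]
    [MeasurableSpace X] [BorelSpace X]
    {Ω : Type*} [MeasurableSpace Ω]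
    (Pr : Measure Ω) [IsProbabilityMeasure Pr]
    (P : Kernel X X) [IsMarkovKernel P]
    (π μ : Measure X) [IsProbabilityMeasure π] [IsProbabilityMeasure μ]
    -- `π` is the unique invariant distribution of `P`
    (hinv : π.bind (fun x => P x) = π)
    (huniq : ∀ π' : Measure X, IsProbabilityMeasure π' →
      π'.bind (fun x => P x) = π' → π' = π)
    -- `Z` is a Markov chain with transition kernel `P`, started from `Z₀ ∼ μ`
    (Z : ℕ → Ω → X) (hZmeas : ∀ i, Measurable (Z i))
    (hZ0 : Pr.map (Z 0) = μ)
    (hstep : ∀ i, Pr.map (fun ω => (Z i ω, Z (i + 1) ω)) = (Pr.map (Z i)).compProd P)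
    -- warm start: `μ ≪ π` with `dμ/dπ ∈ L^p(π)` for some `p ∈ (1,∞]`
    (p : ℝ≥0∞) (hp : 1 < p) (hac : μ ≪ π)
    (hrn : MemLp (fun x => (μ.rnDeriv π x).toReal) p π)
    -- pseudo spectral gap `γ > 0`, entering through the warm-start Bernstein inequality
    (γ : ℝ) (hγ : 0 < γ)
    (hBernstein : ∀ g : X → ℝ, Measurable g → (∃ M, ∀ x, |g x| ≤ M) →
      ∀ (m : ℕ) (x : ℝ), 0 < x →
        Pr {ω | x ≤ ∑ i ∈ Finset.range m, (g (Z i ω) - ∫ y, g y ∂π)} ≤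
          eLpNorm (fun x => (μ.rnDeriv π x).toReal) p π *
            ENNReal.ofReal (Real.exp (-(1 / conjExp p) * (γ * x ^ 2) /
              (8 * ((m : ℝ) + γ⁻¹) * varPi π g + 20 * supDev π g * x))))
    (n : ℕ) (hn : γ⁻¹ ≤ (n : ℝ)) (x : X) (h : ℝ) (hh : 0 < h) :
    Pr {ω | ∑ i ∈ Finset.range n,
        (Metric.closedBall x h).indicator (fun _ => (1 : ℝ)) (Z i ω) = 0} ≤
      eLpNorm (fun y => (μ.rnDeriv π y).toReal) p π *
        ENNReal.ofReal (Real.exp (-((n : ℝ) * (π (Metric.closedBall x h)).toReal * γ) /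
          (36 * conjExp p))) := by

  classical
  set B := Metric.closedBall x h with hBdef
  have hBmeas : MeasurableSet B := measurableSet_closedBall
  set s : ℝ := (π B).toReal with hsdef
  have hs_nonneg : 0 ≤ s := ENNReal.toReal_nonneg
  have hπB_le : π B ≤ 1 := prob_le_one
  have hs_le_one : s ≤ 1 := by
    have := ENNReal.toReal_mono (by simp) hπB_le
    simpa using this
  have hn1 : 1 ≤ n := by
    by_contra hcon
    push_neg at hcon
    interval_cases n
    · simp only [Nat.cast_zero] at hn
      exact absurd hn (not_le.mpr (inv_pos.mpr hγ))
  have hnpos : (0:ℝ) < n := by exact_mod_cast Nat.lt_of_lt_of_le Nat.zero_lt_one hn1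
  -- conjugate exponent positivity
  have hc_pos : 0 < conjExp p := by
    unfold conjExp
    split_ifs with hpt
    · exact one_pos
    · have ht : 1 < p.toReal := by
        have := (ENNReal.toReal_lt_toReal (by simp) hpt).mpr hp
        simpa using this
      exact div_pos (by linarith) (by linarith)
  -- the norm of the density is at least 1
  have hnorm1 : (1 : ℝ≥0∞) ≤ eLpNorm (fun y => (μ.rnDeriv π y).toReal) p π := by
    have h1 : eLpNorm (fun y => (μ.rnDeriv π y).toReal) 1 π = 1 := by
      rw [eLpNorm_one_eq_lintegral_enorm]
      have hae : ∀ᵐ y ∂π, (‖(μ.rnDeriv π y).toReal‖ₑ : ℝ≥0∞) = μ.rnDeriv π y := by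
        filter_upwards [μ.rnDeriv_lt_top π] with y hy
        rw [Real.enorm_eq_ofReal ENNReal.toReal_nonneg, ENNReal.ofReal_toReal hy.ne]
      rw [lintegral_congr_ae hae, Measure.lintegral_rnDeriv hac]
      simp
    calc (1 : ℝ≥0∞) = eLpNorm (fun y => (μ.rnDeriv π y).toReal) 1 π := h1.symm
      _ ≤ eLpNorm (fun y => (μ.rnDeriv π y).toReal) p π :=
          eLpNorm_le_eLpNorm_of_exponent_le hp.le hrn.aestronglyMeasurable
  rcases eq_or_lt_of_le hs_nonneg with hs0 | hs_pos
  · -- case s = 0 : trivial bound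
    have hexp : Real.exp (-((n : ℝ) * (π B).toReal * γ) / (36 * conjExp p)) = 1 := by
      rw [← hsdef, ← hs0]
      simp
    calc Pr {ω | ∑ i ∈ Finset.range n, B.indicator (fun _ => (1:ℝ)) (Z i ω) = 0}
        ≤ 1 := prob_le_one
      _ ≤ eLpNorm (fun y => (μ.rnDeriv π y).toReal) p π *
            ENNReal.ofReal (Real.exp (-((n : ℝ) * (π B).toReal * γ) / (36 * conjExp p))) := by
          rw [hexp]
          simpa using hnorm1
  rcases lt_or_eq_of_le hs_le_one with hs_lt_one | hs_eq_one
  swap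
  · -- case s = 1 : the event has probability zero
    have hπB1 : π B = 1 := ENNReal.toReal_eq_one_iff _ |>.mp hs_eq_one
    have hπBc : π Bᶜ = 0 := by
      rw [measure_compl hBmeas (by simp [hπB1]), hπB1, measure_univ]
      simp
    have hμBc : μ Bᶜ = 0 := hac hπBc
    have hsub : {ω | ∑ i ∈ Finset.range n, B.indicator (fun _ => (1:ℝ)) (Z i ω) = 0}
        ⊆ (Z 0) ⁻¹' Bᶜ := by
      intro ω hω
      simp only [Set.mem_setOf_eq] at hω
      have hterm : ∀ i ∈ Finset.range n, B.indicator (fun _ => (1:ℝ)) (Z i ω) = 0 :=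
        (Finset.sum_eq_zero_iff_of_nonneg (fun i _ => Set.indicator_nonneg (by simp) _)).mp hω
      have h0 := hterm 0 (Finset.mem_range.mpr (Nat.lt_of_lt_of_le Nat.zero_lt_one hn1))
      intro hmem
      rw [Set.indicator_of_mem hmem] at h0
      exact one_ne_zero h0
    have : Pr {ω | ∑ i ∈ Finset.range n, B.indicator (fun _ => (1:ℝ)) (Z i ω) = 0} = 0 := by
      refine le_antisymm ?_ zero_le
      calc Pr _ ≤ Pr ((Z 0) ⁻¹' Bᶜ) := measure_mono hsub
        _ = (Pr.map (Z 0)) Bᶜ := (Measure.map_apply (hZmeas 0) hBmeas.compl).symm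
        _ = μ Bᶜ := by rw [hZ0]
        _ = 0 := hμBc
    rw [this]
    exact zero_le
  -- main case : 0 < s < 1, apply the Bernstein inequality
  · set g : X → ℝ := fun y => -(B.indicator (fun _ => (1:ℝ)) y) with hgdef
    have hgmeas : Measurable g := (measurable_const.indicator hBmeas).neg
    have hne : Nonempty X := ⟨x⟩
    have hind01 : ∀ y : X, B.indicator (fun _ => (1:ℝ)) y = 0 ∨
        B.indicator (fun _ => (1:ℝ)) y = 1 := by
      intro y
      by_cases hy : y ∈ B
      · right; rw [Set.indicator_of_mem hy]
      · left; rw [Set.indicator_of_notMem hy]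
    have hgbdd : ∃ M, ∀ y, |g y| ≤ M := by
      refine ⟨1, fun y => ?_⟩
      have : g y = -(B.indicator (fun _ => (1:ℝ)) y) := rfl
      rw [this, abs_neg, abs_le]
      rcases hind01 y with h0 | h0 <;> rw [h0] <;> norm_num
    have hint : ∫ y, g y ∂π = -s := by
      have : ∫ y, g y ∂π = ∫ y, -(B.indicator (fun _ => (1:ℝ)) y) ∂π := rfl
      rw [this, integral_neg, integral_indicator_const (1:ℝ) hBmeas]
      simp [hsdef]
      rfl
    have hsq : ∫ y, g y ^ 2 ∂π = s := by
      have heq : ∀ y, g y ^ 2 = B.indicator (fun _ => (1:ℝ)) y := by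
        intro y
        have : g y = -(B.indicator (fun _ => (1:ℝ)) y) := rfl
        rw [this, neg_pow]
        rcases hind01 y with h0 | h0 <;> rw [h0] <;> norm_num
      simp only [heq]
      rw [integral_indicator_const (1:ℝ) hBmeas]
      simp [hsdef]
      rfl
    have hvar : varPi π g = s - s ^ 2 := by
      rw [varPi, hint, hsq]; ring
    have habs : ∀ y : X, |g y - ∫ y, g y ∂π| ≤ 1 := by
      intro y
      rw [hint, sub_neg_eq_add]
      have : g y = -(B.indicator (fun _ => (1:ℝ)) y) := rfl
      rw [this, abs_le]
      rcases hind01 y with h0 | h0 <;> rw [h0] <;> constructor <;> linarith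
    have hdev_le : supDev π g ≤ 1 := ciSup_le habs
    have hdev_nonneg : 0 ≤ supDev π g := by
      have hb : BddAbove (Set.range fun y => |g y - ∫ y, g y ∂π|) := by
        refine ⟨1, fun r hr => ?_⟩
        obtain ⟨y, rfl⟩ := hr
        exact habs y
      exact le_trans (abs_nonneg _) (le_ciSup hb x)
    -- event inclusion
    have hsub : {ω | ∑ i ∈ Finset.range n, B.indicator (fun _ => (1:ℝ)) (Z i ω) = 0}
        ⊆ {ω | (n:ℝ) * s ≤ ∑ i ∈ Finset.range n, (g (Z i ω) - ∫ y, g y ∂π)} := by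
      intro ω hω
      simp only [Set.mem_setOf_eq] at hω ⊢
      have : ∑ i ∈ Finset.range n, (g (Z i ω) - ∫ y, g y ∂π)
          = -(∑ i ∈ Finset.range n, B.indicator (fun _ => (1:ℝ)) (Z i ω)) + (n:ℝ) * s := by
        rw [hint, hgdef]
        simp only [sub_neg_eq_add]
        rw [Finset.sum_add_distrib, ← Finset.sum_neg_distrib, Finset.sum_const,
          Finset.card_range, nsmul_eq_mul]
      rw [this, hω]
      simp
    have hx_pos : (0:ℝ) < (n:ℝ) * s := mul_pos hnpos hs_pos
    have hbern := hBernstein g hgmeas hgbdd n ((n:ℝ) * s) hx_pos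
    -- compare the exponents
    set c := conjExp p with hcdef
    set D : ℝ := 8 * ((n : ℝ) + γ⁻¹) * varPi π g + 20 * supDev π g * ((n:ℝ) * s) with hDdef
    have hD_pos : 0 < D := by
      rw [hDdef, hvar]
      have h1 : 0 < 8 * ((n : ℝ) + γ⁻¹) * (s - s ^ 2) := by
        have : 0 < s - s ^ 2 := by nlinarith
        have : 0 < (n : ℝ) + γ⁻¹ := by positivity
        positivity
      nlinarith [mul_nonneg (mul_nonneg (by norm_num : (0:ℝ) ≤ 20) hdev_nonneg) hx_pos.le]
    have hD_le : D ≤ 36 * ((n:ℝ) * s) := by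
      rw [hDdef, hvar]
      have h1 : 8 * ((n : ℝ) + γ⁻¹) * (s - s ^ 2) ≤ 16 * ((n:ℝ) * s) := by
        have hss : s - s ^ 2 ≤ s := by nlinarith
        have hng : (n : ℝ) + γ⁻¹ ≤ 2 * n := by linarith
        have h0 : 0 ≤ s - s ^ 2 := by nlinarith
        calc 8 * ((n : ℝ) + γ⁻¹) * (s - s ^ 2) ≤ 8 * (2 * n) * (s - s ^ 2) := by nlinarith
          _ ≤ 8 * (2 * n) * s := by nlinarith
          _ = 16 * ((n:ℝ) * s) := by ring
      have h2 : 20 * supDev π g * ((n:ℝ) * s) ≤ 20 * ((n:ℝ) * s) := by nlinarith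
      linarith
    have hexp_le : -(1 / c) * (γ * ((n:ℝ) * s) ^ 2) / D
        ≤ -((n : ℝ) * s * γ) / (36 * c) := by
      have h1 : ((n:ℝ) * s) / 36 ≤ ((n:ℝ) * s) ^ 2 / D := by
        have heq : ((n:ℝ) * s) ^ 2 / (36 * ((n:ℝ) * s)) = ((n:ℝ) * s) / 36 := by
          field_simp
        rw [← heq]
        exact div_le_div_of_nonneg_left (sq_nonneg _) hD_pos hD_le
      have h2 : (γ / c) * (((n:ℝ) * s) / 36) ≤ (γ / c) * (((n:ℝ) * s) ^ 2 / D) :=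
        mul_le_mul_of_nonneg_left h1 (by positivity)
      have e1 : -(1 / c) * (γ * ((n:ℝ) * s) ^ 2) / D = -((γ / c) * (((n:ℝ) * s) ^ 2 / D)) := by
        ring
      have e2 : -((n : ℝ) * s * γ) / (36 * c) = -((γ / c) * (((n:ℝ) * s) / 36)) := by
        field_simp
      rw [e1, e2]
      linarith
    calc Pr {ω | ∑ i ∈ Finset.range n, B.indicator (fun _ => (1:ℝ)) (Z i ω) = 0}
        ≤ Pr {ω | (n:ℝ) * s ≤ ∑ i ∈ Finset.range n, (g (Z i ω) - ∫ y, g y ∂π)} :=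
          measure_mono hsub
      _ ≤ eLpNorm (fun y => (μ.rnDeriv π y).toReal) p π *
            ENNReal.ofReal (Real.exp (-(1 / conjExp p) * (γ * ((n:ℝ) * s) ^ 2) /
              (8 * ((n : ℝ) + γ⁻¹) * varPi π g + 20 * supDev π g * ((n:ℝ) * s)))) := hbern
      _ ≤ eLpNorm (fun y => (μ.rnDeriv π y).toReal) p π *
            ENNReal.ofReal (Real.exp (-((n : ℝ) * (π B).toReal * γ) / (36 * conjExp p))) := by
          refine mul_le_mul_right (ENNReal.ofReal_le_ofReal (Real.exp_le_exp.mpr ?_)) _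
          rw [← hsdef, ← hDdef, ← hcdef]
          exact hexp_le
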